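/- Let ψ ∈ PL_D(r, L) for some D ∈ ℕ, r ∈ [2,∞) and L > 0. Then for any n ∈ ℕ and any vectors x^ℓ = (x₁^ℓ,…,x_n^ℓ) ∈ ℝⁿ and y^ℓ = (y₁^ℓ,…,y_n^ℓ) ∈ ℝⁿ for 1 ≤ ℓ ≤ D, we have n⁻¹ Σ_{i=1}^n |ψ(x_i¹,…,x_i^D) − ψ(y_i¹,…,y_i^D)| ≤ L D^{r/2 − 1} ( Σ_{ℓ=1}^D ‖x^ℓ − y^ℓ‖_{n,r}^r )^{1/r} ( 1 + Σ_{ℓ=1}^D ( ‖x^ℓ‖_{n,r}^{r−1} + ‖y^ℓ‖_{n,r}^{r−1} ) ). -/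

import Mathlib

open Finset

/-- The Euclidean norm on `ℝ^D`. -/
noncomputable def euclNorm {D : ℕ} (x : Fin D → ℝ) : ℝ :=
  Real.sqrt (∑ i, (x i) ^ 2)

lemma euclNorm_nonneg {D : ℕ} (x : Fin D → ℝ) : 0 ≤ euclNorm x := Real.sqrt_nonneg _

/-- Two-term subadditivity of `x ↦ x ^ p` for `0 ≤ p ≤ 1`. -/
lemma real_rpow_add_le {x y : ℝ} (hx : 0 ≤ x) (hy : 0 ≤ y) {p : ℝ} (hp0 : 0 ≤ p) (hp1 : p ≤ 1) :
    (x + y) ^ p ≤ x ^ p + y ^ p := by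
  lift x to NNReal using hx
  lift y to NNReal using hy
  have := NNReal.rpow_add_le_add_rpow x y hp0 hp1
  exact_mod_cast this

/-- Subadditivity of `x ↦ x ^ p` over finite sums, `0 < p ≤ 1`. -/
lemma real_rpow_sum_le {ι : Type*} (s : Finset ι) (f : ι → ℝ) (hf : ∀ i ∈ s, 0 ≤ f i)
    {p : ℝ} (hp0 : 0 < p) (hp1 : p ≤ 1) :
    (∑ i ∈ s, f i) ^ p ≤ ∑ i ∈ s, f i ^ p := by
  induction s using Finset.cons_induction with
  | empty => simp [Real.zero_rpow hp0.ne']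
  | cons a s ha ih =>
    rw [Finset.sum_cons, Finset.sum_cons]
    have h1 : 0 ≤ f a := hf a (Finset.mem_cons_self a s)
    have h2 : ∀ i ∈ s, 0 ≤ f i := fun i hi => hf i (Finset.mem_cons_of_mem hi)
    calc (f a + ∑ i ∈ s, f i) ^ p ≤ f a ^ p + (∑ i ∈ s, f i) ^ p :=
          real_rpow_add_le h1 (Finset.sum_nonneg h2) hp0.le hp1
      _ ≤ f a ^ p + ∑ i ∈ s, f i ^ p := by gcongr; exact ih h2

/-- `ℓ²` norm bounded by `ℓʳ` norm, `r ≥ 2`. -/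
lemma euclNorm_le_lr {D : ℕ} {r : ℝ} (hr : 2 ≤ r) (v : Fin D → ℝ) :
    euclNorm v ≤ (D : ℝ) ^ (1/2 - 1/r) * (∑ ℓ, |v ℓ| ^ r) ^ (1/r) := by
  have hr0 : (0:ℝ) < r := lt_of_lt_of_le two_pos hr
  have h1 : euclNorm v = (∑ ℓ, |v ℓ| ^ (2:ℝ)) ^ ((1:ℝ)/2) := by
    rw [euclNorm, Real.sqrt_eq_rpow]
    congr 1
    refine Finset.sum_congr rfl fun ℓ _ => ?_
    have h2 := Real.rpow_natCast |v ℓ| 2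
    push_cast at h2
    rw [← sq_abs, ← h2]
  have hp : (1:ℝ) ≤ r / 2 := by linarith
  have holder := Real.inner_le_weight_mul_Lp_of_nonneg Finset.univ hp (fun _ => (1:ℝ))
      (fun ℓ => |v ℓ| ^ (2:ℝ)) (fun _ => zero_le_one)
      (fun ℓ => Real.rpow_nonneg (abs_nonneg _) _)
  simp only [one_mul, Finset.sum_const, Finset.card_univ, Fintype.card_fin, nsmul_eq_mul,
    mul_one] at holder
  have hpow : ∀ ℓ : Fin D, (|v ℓ| ^ (2:ℝ)) ^ (r/2) = |v ℓ| ^ r := by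
    intro ℓ
    rw [← Real.rpow_mul (abs_nonneg _)]
    congr 1; field_simp
  rw [show ∀ c : ℝ, (∑ ℓ : Fin D, (|v ℓ| ^ (2:ℝ)) ^ (r/2)) ^ c
      = (∑ ℓ : Fin D, |v ℓ| ^ r) ^ c from fun c => by rw [Finset.sum_congr rfl fun ℓ _ => hpow ℓ]]
    at holder
  have hmono := Real.rpow_le_rpow (Finset.sum_nonneg fun ℓ _ => Real.rpow_nonneg (abs_nonneg _) _)
      holder (by norm_num : (0:ℝ) ≤ 1/2)
  rw [h1]
  refine hmono.trans_eq ?_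
  rw [Real.mul_rpow (Real.rpow_nonneg (Nat.cast_nonneg _) _)
      (Real.rpow_nonneg (Finset.sum_nonneg fun ℓ _ => Real.rpow_nonneg (abs_nonneg _) _) _),
    ← Real.rpow_mul (Nat.cast_nonneg _),
    ← Real.rpow_mul (Finset.sum_nonneg fun ℓ _ => Real.rpow_nonneg (abs_nonneg _) _)]
  congr 2
  · rw [inv_div]; ring
  · rw [inv_div]; ring

/-- Pseudo-Lipschitz functions of order `r` with constant `L` on `ℝ^D` (the class
`PL_D(r, L)`), with respect to the Euclidean norm. -/
def PLD {D : ℕ} (r L : ℝ) (ψ : (Fin D → ℝ) → ℝ) : Prop :=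
  ∀ x y : Fin D → ℝ, |ψ x - ψ y| ≤
    L * euclNorm (fun i => x i - y i) *
      (1 + euclNorm x ^ (r - 1) + euclNorm y ^ (r - 1))

lemma pointwise_bound {D : ℕ} (hD : 1 ≤ D) {r L : ℝ} (hr : 2 ≤ r) (hL : 0 < L)
    (ψ : (Fin D → ℝ) → ℝ) (hψ : PLD r L ψ) (a b : Fin D → ℝ) :
    |ψ a - ψ b| ≤ L * (D : ℝ) ^ (r/2 - 1) * (∑ ℓ, |a ℓ - b ℓ| ^ r) ^ (1/r) *
      (1 + (∑ ℓ, |a ℓ| ^ r) ^ ((r-1)/r) + (∑ ℓ, |b ℓ| ^ r) ^ ((r-1)/r)) := by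
  have hr0 : (0:ℝ) < r := lt_of_lt_of_le two_pos hr
  have hrne : r ≠ 0 := hr0.ne'
  have hDR : (1:ℝ) ≤ (D:ℝ) := by exact_mod_cast hD
  have hexp : (0:ℝ) ≤ 1/2 - 1/r := by
    rw [sub_nonneg]
    exact one_div_le_one_div_of_le two_pos hr
  set c := (D:ℝ) ^ ((1:ℝ)/2 - 1/r) with hc
  have hc0 : 0 ≤ c := Real.rpow_nonneg (by positivity) _
  have hc1 : 1 ≤ c := Real.one_le_rpow hDR hexp
  have hcr1 : (1:ℝ) ≤ c ^ (r - 1) := Real.one_le_rpow hc1 (by linarith)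
  have hcr0 : (0:ℝ) ≤ c ^ (r - 1) := le_trans zero_le_one hcr1
  set Pd := (∑ ℓ, |a ℓ - b ℓ| ^ r) ^ ((1:ℝ)/r) with hPd
  set Pa := (∑ ℓ, |a ℓ| ^ r) ^ ((r-1)/r) with hPa
  set Pb := (∑ ℓ, |b ℓ| ^ r) ^ ((r-1)/r) with hPb
  have hPd0 : 0 ≤ Pd := Real.rpow_nonneg (Finset.sum_nonneg fun ℓ _ => Real.rpow_nonneg (abs_nonneg _) _) _
  have hPa0 : 0 ≤ Pa := Real.rpow_nonneg (Finset.sum_nonneg fun ℓ _ => Real.rpow_nonneg (abs_nonneg _) _) _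
  have hPb0 : 0 ≤ Pb := Real.rpow_nonneg (Finset.sum_nonneg fun ℓ _ => Real.rpow_nonneg (abs_nonneg _) _) _
  -- bounds on the euclidean norms
  have hd : euclNorm (fun i => a i - b i) ≤ c * Pd := euclNorm_le_lr hr _
  have hax : euclNorm a ^ (r-1) ≤ c ^ (r-1) * Pa := by
    have h1 := Real.rpow_le_rpow (euclNorm_nonneg a) (euclNorm_le_lr hr a) (by linarith : (0:ℝ) ≤ r - 1)
    refine h1.trans_eq ?_
    rw [Real.mul_rpow hc0 (Real.rpow_nonneg (Finset.sum_nonneg fun ℓ _ => Real.rpow_nonneg (abs_nonneg _) _) _),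
      ← Real.rpow_mul (Finset.sum_nonneg fun ℓ _ => Real.rpow_nonneg (abs_nonneg _) _)]
    rw [hPa, one_div, inv_mul_eq_div]
  have hby : euclNorm b ^ (r-1) ≤ c ^ (r-1) * Pb := by
    have h1 := Real.rpow_le_rpow (euclNorm_nonneg b) (euclNorm_le_lr hr b) (by linarith : (0:ℝ) ≤ r - 1)
    refine h1.trans_eq ?_
    rw [Real.mul_rpow hc0 (Real.rpow_nonneg (Finset.sum_nonneg fun ℓ _ => Real.rpow_nonneg (abs_nonneg _) _) _),
      ← Real.rpow_mul (Finset.sum_nonneg fun ℓ _ => Real.rpow_nonneg (abs_nonneg _) _)]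
    rw [hPb, one_div, inv_mul_eq_div]
  have hccr : c * c ^ (r - 1) = (D:ℝ) ^ (r/2 - 1) := by
    have hDpos : (0:ℝ) < (D:ℝ) := lt_of_lt_of_le one_pos hDR
    rw [hc, ← Real.rpow_mul (by positivity), ← Real.rpow_add hDpos]
    congr 1
    field_simp
    ring
  calc |ψ a - ψ b| ≤ L * euclNorm (fun i => a i - b i) *
        (1 + euclNorm a ^ (r - 1) + euclNorm b ^ (r - 1)) := hψ a b
    _ ≤ L * (c * Pd) * (1 + (c ^ (r-1) * Pa) + (c ^ (r-1) * Pb)) := by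
        have h0 : 0 ≤ euclNorm a ^ (r-1) := Real.rpow_nonneg (euclNorm_nonneg a) _
        have h0' : 0 ≤ euclNorm b ^ (r-1) := Real.rpow_nonneg (euclNorm_nonneg b) _
        apply mul_le_mul
        · exact mul_le_mul_of_nonneg_left hd hL.le
        · linarith
        · linarith
        · positivity
    _ ≤ L * (c * Pd) * (c ^ (r-1) * (1 + Pa + Pb)) := by
        apply mul_le_mul_of_nonneg_left _ (by positivity)
        have : c ^ (r-1) * (1 + Pa + Pb) = c ^ (r-1) + c ^ (r-1) * Pa + c ^ (r-1) * Pb := by ring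
        rw [this]
        linarith
    _ = L * (D:ℝ) ^ (r/2 - 1) * Pd * (1 + Pa + Pb) := by rw [← hccr]; ring

/-- The scaled `ℓ_{n,r}` norm `‖v‖_{n,r} = (n⁻¹ ∑ᵢ |vᵢ|^r)^{1/r}` on `ℝⁿ`. -/
noncomputable def empNorm {n : ℕ} (r : ℝ) (v : Fin n → ℝ) : ℝ :=
  ((n : ℝ)⁻¹ * ∑ i, |v i| ^ r) ^ (1 / r)

lemma empNorm_nonneg {n : ℕ} (r : ℝ) (v : Fin n → ℝ) : 0 ≤ empNorm r v :=
  Real.rpow_nonneg (by positivity) _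

lemma empNorm_rpow {n : ℕ} {r : ℝ} (hr : r ≠ 0) (v : Fin n → ℝ) :
    empNorm r v ^ r = (n : ℝ)⁻¹ * ∑ i, |v i| ^ r := by
  rw [empNorm, ← Real.rpow_mul (by positivity), one_div, inv_mul_cancel₀ hr, Real.rpow_one]

/-- **Averaged pseudo-Lipschitz bound** (Lemma 13 of the paper).  For
`ψ ∈ PL_D(r, L)` with `r ≥ 2`, the average row-wise discrepancy of `ψ` over two
`D`-tuples of vectors in `ℝⁿ` is bounded by
`L D^{r/2−1} (∑ℓ ‖xℓ−yℓ‖ⁿᵣ^r)^{1/r} (1 + ∑ℓ (‖xℓ‖ⁿᵣ^{r−1} + ‖yℓ‖ⁿᵣ^{r−1}))`. -/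
theorem pseudoLipschitz_average_bound
    {D : ℕ} (r L : ℝ) (hr : 2 ≤ r) (hL : 0 < L)
    (ψ : (Fin D → ℝ) → ℝ) (hψ : PLD r L ψ)
    (n : ℕ) (x y : Fin D → Fin n → ℝ) :
    (n : ℝ)⁻¹ * ∑ i, |ψ (fun ℓ => x ℓ i) - ψ (fun ℓ => y ℓ i)| ≤
      L * (D : ℝ) ^ (r / 2 - 1) *
        (∑ ℓ, empNorm r (fun i => x ℓ i - y ℓ i) ^ r) ^ (1 / r) *
        (1 + ∑ ℓ, (empNorm r (x ℓ) ^ (r - 1) + empNorm r (y ℓ) ^ (r - 1))) := by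
  have hr0 : (0:ℝ) < r := lt_of_lt_of_le two_pos hr
  have hrne : r ≠ 0 := hr0.ne'
  have hr1 : (1:ℝ) < r := lt_of_lt_of_le one_lt_two hr
  have hRHS0 : 0 ≤ L * (D : ℝ) ^ (r / 2 - 1) *
      (∑ ℓ, empNorm r (fun i => x ℓ i - y ℓ i) ^ r) ^ (1 / r) *
      (1 + ∑ ℓ, (empNorm r (x ℓ) ^ (r - 1) + empNorm r (y ℓ) ^ (r - 1))) := by
    apply mul_nonneg
    apply mul_nonneg
    · exact mul_nonneg hL.le (Real.rpow_nonneg (Nat.cast_nonneg _) _)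
    · exact Real.rpow_nonneg (Finset.sum_nonneg fun ℓ _ =>
        Real.rpow_nonneg (empNorm_nonneg _ _) _) _
    · have : ∀ ℓ ∈ Finset.univ, 0 ≤ empNorm r (x ℓ) ^ (r - 1) + empNorm r (y ℓ) ^ (r - 1) :=
        fun ℓ _ => add_nonneg (Real.rpow_nonneg (empNorm_nonneg _ _) _)
          (Real.rpow_nonneg (empNorm_nonneg _ _) _)
      have h := Finset.sum_nonneg this
      linarith
  rcases Nat.eq_zero_or_pos n with hn | hn
  · subst hn
    simp only [Finset.univ_eq_empty, Finset.sum_empty, mul_zero]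
    exact hRHS0
  rcases Nat.eq_zero_or_pos D with hD | hD
  · subst hD
    have hzero : ∑ i, |ψ (fun ℓ => x ℓ i) - ψ (fun ℓ => y ℓ i)| = 0 :=
      Finset.sum_eq_zero fun i _ => by
        rw [show (fun ℓ : Fin 0 => x ℓ i) = (fun ℓ => y ℓ i) from funext fun ℓ => ℓ.elim0,
          sub_self, abs_zero]
    rw [hzero, mul_zero]
    exact hRHS0
  -- main case
  have hnR : (0:ℝ) < (n:ℝ) := by exact_mod_cast hn
  have hpq : r.HolderConjugate (r / (r-1)) := Real.HolderConjugate.conjExponent hr1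
  set q := r / (r - 1) with hqdef
  have hq1 : 1 ≤ q := hpq.symm.lt.le
  have hq0 : 0 < q := hpq.symm.pos
  have hqne : q ≠ 0 := hq0.ne'
  -- abbreviations (as plain functions)
  have key : (n : ℝ)⁻¹ * ∑ i, ((∑ ℓ, |x ℓ i - y ℓ i| ^ r) ^ ((1:ℝ)/r) *
        (1 + (∑ ℓ, |x ℓ i| ^ r) ^ ((r-1)/r) + (∑ ℓ, |y ℓ i| ^ r) ^ ((r-1)/r))) ≤
      (∑ ℓ, empNorm r (fun i => x ℓ i - y ℓ i) ^ r) ^ (1 / r) *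
      (1 + ∑ ℓ, (empNorm r (x ℓ) ^ (r - 1) + empNorm r (y ℓ) ^ (r - 1))) := by
    have hr1ne : r - 1 ≠ 0 := by linarith
    set A : Fin n → ℝ := fun i => (∑ ℓ, |x ℓ i - y ℓ i| ^ r) ^ ((1:ℝ)/r) with hAdef
    set Px : Fin n → ℝ := fun i => (∑ ℓ, |x ℓ i| ^ r) ^ ((r-1)/r) with hPxdef
    set Py : Fin n → ℝ := fun i => (∑ ℓ, |y ℓ i| ^ r) ^ ((r-1)/r) with hPydef
    have hA0 : ∀ i, 0 ≤ A i := fun i => Real.rpow_nonneg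
      (Finset.sum_nonneg fun ℓ _ => Real.rpow_nonneg (abs_nonneg _) _) _
    have hPx0 : ∀ i, 0 ≤ Px i := fun i => Real.rpow_nonneg
      (Finset.sum_nonneg fun ℓ _ => Real.rpow_nonneg (abs_nonneg _) _) _
    have hPy0 : ∀ i, 0 ≤ Py i := fun i => Real.rpow_nonneg
      (Finset.sum_nonneg fun ℓ _ => Real.rpow_nonneg (abs_nonneg _) _) _
    have hB0 : ∀ i, (0:ℝ) ≤ 1 + Px i + Py i := fun i => by
      have := hPx0 i; have := hPy0 i; linarith
    set nr : ℝ := (n:ℝ) ^ (-(1/r)) with hnrdef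
    set nq : ℝ := (n:ℝ) ^ (-(1/q)) with hnqdef
    have hnr0 : 0 ≤ nr := Real.rpow_nonneg hnR.le _
    have hnq0 : 0 ≤ nq := Real.rpow_nonneg hnR.le _
    have hnrnq : nr * nq = (n:ℝ)⁻¹ := by
      rw [hnrdef, hnqdef, ← Real.rpow_add hnR]
      have h := hpq.inv_add_inv_eq_one
      rw [show -(1/r) + -(1/q) = (-1:ℝ) by rw [one_div, one_div]; linarith,
        Real.rpow_neg_one]
    have hnrr : nr ^ r = (n:ℝ)⁻¹ := by
      rw [hnrdef, ← Real.rpow_mul hnR.le,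
        show -(1/r) * r = (-1:ℝ) by field_simp, Real.rpow_neg_one]
    have hnqq : nq ^ q = (n:ℝ)⁻¹ := by
      rw [hnqdef, ← Real.rpow_mul hnR.le,
        show -(1/q) * q = (-1:ℝ) by field_simp, Real.rpow_neg_one]
    -- Hölder
    have holder := Real.inner_le_Lp_mul_Lq_of_nonneg Finset.univ hpq
      (f := fun i => nr * A i) (g := fun i => nq * (1 + Px i + Py i))
      (fun i _ => mul_nonneg hnr0 (hA0 i)) (fun i _ => mul_nonneg hnq0 (hB0 i))
    -- identify the left side of Hölder
    have hlhs : ∑ i, (nr * A i) * (nq * (1 + Px i + Py i)) =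
        (n:ℝ)⁻¹ * ∑ i, (A i * (1 + Px i + Py i)) := by
      rw [Finset.mul_sum]
      refine Finset.sum_congr rfl fun i _ => ?_
      rw [show (nr * A i) * (nq * (1 + Px i + Py i))
          = (nr * nq) * (A i * (1 + Px i + Py i)) by ring, hnrnq]
    -- identify the first factor
    have hfac1 : (∑ i, (nr * A i) ^ r) ^ (1/r) =
        (∑ ℓ, empNorm r (fun i => x ℓ i - y ℓ i) ^ r) ^ (1 / r) := by
      congr 1
      have hterm : ∀ i : Fin n, (nr * A i) ^ r = (n:ℝ)⁻¹ * ∑ ℓ, |x ℓ i - y ℓ i| ^ r := by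
        intro i
        rw [Real.mul_rpow hnr0 (hA0 i), hnrr, hAdef]
        congr 1
        rw [← Real.rpow_mul (Finset.sum_nonneg fun ℓ _ => Real.rpow_nonneg (abs_nonneg _) _),
          one_div, inv_mul_cancel₀ hrne, Real.rpow_one]
      rw [Finset.sum_congr rfl fun i _ => hterm i]
      rw [← Finset.mul_sum, Finset.sum_comm]
      rw [Finset.sum_congr rfl fun ℓ (_ : ℓ ∈ Finset.univ) =>
        (empNorm_rpow hrne (fun i => x ℓ i - y ℓ i))]
      rw [← Finset.mul_sum]
    -- bound the second factor
    have hsubadd : ∀ z : Fin D → Fin n → ℝ,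
        (∑ i, (nq * (∑ ℓ, |z ℓ i| ^ r) ^ ((r-1)/r)) ^ q) ^ (1/q) ≤
          ∑ ℓ, empNorm r (z ℓ) ^ (r - 1) := by
      intro z
      have hterm : ∀ i : Fin n,
          (nq * (∑ ℓ, |z ℓ i| ^ r) ^ ((r-1)/r)) ^ q = (n:ℝ)⁻¹ * ∑ ℓ, |z ℓ i| ^ r := by
        intro i
        have h0 : (0:ℝ) ≤ ∑ ℓ, |z ℓ i| ^ r :=
          Finset.sum_nonneg fun ℓ _ => Real.rpow_nonneg (abs_nonneg _) _
        rw [Real.mul_rpow hnq0 (Real.rpow_nonneg h0 _), hnqq,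
          ← Real.rpow_mul h0, show (r-1)/r * q = 1 by rw [hqdef]; field_simp,
          Real.rpow_one]
      rw [Finset.sum_congr rfl fun i _ => hterm i, ← Finset.mul_sum, Finset.sum_comm,
        Finset.mul_sum]
      have hsum : ∀ ℓ : Fin D, (n:ℝ)⁻¹ * ∑ i, |z ℓ i| ^ r = empNorm r (z ℓ) ^ r :=
        fun ℓ => (empNorm_rpow hrne (z ℓ)).symm
      rw [Finset.sum_congr rfl fun ℓ _ => hsum ℓ]
      have hq1' : 1/q ≤ 1 := by
        rw [div_le_one hq0]; exact hq1
      have := real_rpow_sum_le Finset.univ (fun ℓ => empNorm r (z ℓ) ^ r)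
        (fun ℓ _ => Real.rpow_nonneg (empNorm_nonneg _ _) _) (by positivity) hq1'
      refine this.trans ?_
      refine le_of_eq (Finset.sum_congr rfl fun ℓ _ => ?_)
      rw [← Real.rpow_mul (empNorm_nonneg _ _), mul_one_div, hpq.div_conj_eq_sub_one]
    -- Minkowski
    have hconst : (∑ _i : Fin n, nq ^ q) ^ (1/q) = 1 := by
      rw [Finset.sum_const, Finset.card_univ, Fintype.card_fin, nsmul_eq_mul, hnqq,
        mul_inv_cancel₀ hnR.ne', Real.one_rpow]
    have hmink : (∑ i, (nq * (1 + Px i + Py i)) ^ q) ^ (1/q) ≤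
        1 + (∑ ℓ, (empNorm r (x ℓ) ^ (r - 1) + empNorm r (y ℓ) ^ (r - 1))) := by
      have e1 : ∀ i : Fin n, nq * (1 + Px i + Py i) = nq + (nq * Px i + nq * Py i) :=
        fun i => by ring
      rw [Finset.sum_congr rfl fun i _ => by rw [e1 i]]
      have m1 := Real.Lp_add_le_of_nonneg Finset.univ
        (f := fun _i : Fin n => nq) (g := fun i => nq * Px i + nq * Py i) hq1
        (fun i _ => hnq0)
        (fun i _ => add_nonneg (mul_nonneg hnq0 (hPx0 i)) (mul_nonneg hnq0 (hPy0 i)))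
      refine m1.trans ?_
      rw [hconst]
      have m2 := Real.Lp_add_le_of_nonneg Finset.univ
        (f := fun i => nq * Px i) (g := fun i => nq * Py i) hq1
        (fun i _ => mul_nonneg hnq0 (hPx0 i)) (fun i _ => mul_nonneg hnq0 (hPy0 i))
      have hx' := hsubadd x
      have hy' := hsubadd y
      rw [Finset.sum_add_distrib]
      have : (∑ i, (nq * Px i) ^ q) ^ (1/q) + (∑ i, (nq * Py i) ^ q) ^ (1/q) ≤
          ∑ ℓ, empNorm r (x ℓ) ^ (r - 1) + ∑ ℓ, empNorm r (y ℓ) ^ (r - 1) := by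
        rw [hPxdef, hPydef] at *
        exact add_le_add hx' hy'
      linarith [m2.trans this]
    -- combine
    rw [← hlhs]
    refine holder.trans ?_
    rw [hfac1]
    apply mul_le_mul_of_nonneg_left hmink
    exact Real.rpow_nonneg (Finset.sum_nonneg fun ℓ _ =>
      Real.rpow_nonneg (empNorm_nonneg _ _) _) _
  -- pointwise bound and conclusion
  have hpoint : ∀ i : Fin n, |ψ (fun ℓ => x ℓ i) - ψ (fun ℓ => y ℓ i)| ≤
      L * (D : ℝ) ^ (r/2 - 1) * ((∑ ℓ, |x ℓ i - y ℓ i| ^ r) ^ ((1:ℝ)/r) *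
        (1 + (∑ ℓ, |x ℓ i| ^ r) ^ ((r-1)/r) + (∑ ℓ, |y ℓ i| ^ r) ^ ((r-1)/r))) := by
    intro i
    have := pointwise_bound hD hr hL ψ hψ (fun ℓ => x ℓ i) (fun ℓ => y ℓ i)
    calc |ψ (fun ℓ => x ℓ i) - ψ (fun ℓ => y ℓ i)| ≤ _ := this
    _ = _ := by ring
  have hLK : 0 ≤ L * (D : ℝ) ^ (r/2 - 1) :=
    mul_nonneg hL.le (Real.rpow_nonneg (Nat.cast_nonneg _) _)
  calc (n : ℝ)⁻¹ * ∑ i, |ψ (fun ℓ => x ℓ i) - ψ (fun ℓ => y ℓ i)|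
      ≤ (n : ℝ)⁻¹ * ∑ i, (L * (D : ℝ) ^ (r/2 - 1) * ((∑ ℓ, |x ℓ i - y ℓ i| ^ r) ^ ((1:ℝ)/r) *
        (1 + (∑ ℓ, |x ℓ i| ^ r) ^ ((r-1)/r) + (∑ ℓ, |y ℓ i| ^ r) ^ ((r-1)/r)))) := by
        apply mul_le_mul_of_nonneg_left _ (by positivity)
        exact Finset.sum_le_sum fun i _ => hpoint i
    _ = L * (D : ℝ) ^ (r/2 - 1) * ((n : ℝ)⁻¹ * ∑ i, ((∑ ℓ, |x ℓ i - y ℓ i| ^ r) ^ ((1:ℝ)/r) *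
        (1 + (∑ ℓ, |x ℓ i| ^ r) ^ ((r-1)/r) + (∑ ℓ, |y ℓ i| ^ r) ^ ((r-1)/r)))) := by
        rw [← Finset.mul_sum]
        ring
    _ ≤ L * (D : ℝ) ^ (r/2 - 1) * ((∑ ℓ, empNorm r (fun i => x ℓ i - y ℓ i) ^ r) ^ (1 / r) *
        (1 + ∑ ℓ, (empNorm r (x ℓ) ^ (r - 1) + empNorm r (y ℓ) ^ (r - 1)))) :=
        mul_le_mul_of_nonneg_left key hLK
    _ = _ := by ring
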